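/- Let (X,δ) be a finite metric space with at least 2 points, let A ⊆ X, and let rad : A → ℝ be a function such that: (i) rad(x) > 0 for every x ∈ A; (ii) rad(x) ≤ ω(MST(X)) for every x ∈ A; and (iii) for every pair of distinct points x,y ∈ A, δ(x,y) ≥ max(rad(x),rad(y))/5. Then Σ_{x∈A} rad(x) ≤ 11·ω(MST(X)). -/

import Mathlib

/-- The weight of a walk in a graph on a metric space: the sum of distances over
its consecutive-vertex pairs. -/
noncomputable def walkWeight {X : Type*} [MetricSpace X] {G : SimpleGraph X} {u v : X}
    (w : G.Walk u v) : ℝ :=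
  (w.darts.map fun d => dist d.toProd.1 d.toProd.2).sum

/-- `G` is a `t`-spanner for the metric space `X`. -/
def IsTSpanner {X : Type*} [MetricSpace X] (G : SimpleGraph X) (t : ℝ) : Prop :=
  ∀ p q : X, ∃ w : G.Walk p q, walkWeight w ≤ t * dist p q

/-- `G` is a `k`-fault-tolerant `t`-spanner for the metric space `X`. -/
def IsFTSpanner {X : Type*} [MetricSpace X] (G : SimpleGraph X) (k : ℕ) (t : ℝ) : Prop :=
  ∀ F : Finset X, F.card ≤ k → ∀ p q : X, p ∉ F → q ∉ F →
    ∃ w : G.Walk p q, (∀ v ∈ w.support, v ∉ F) ∧ walkWeight w ≤ t * dist p q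

/-- The total weight of a graph on a finite metric space: the sum of `dist u v`
over all edges `{u,v}`. -/
noncomputable def graphWeight {X : Type*} [MetricSpace X] [Finite X] (G : SimpleGraph X) : ℝ :=
  ∑ e ∈ (Set.toFinite G.edgeSet).toFinset,
    Sym2.lift ⟨fun a b => dist a b, fun a b => dist_comm a b⟩ e

/-- The minimum spanning tree weight of a finite metric space: the infimum of the
total weight over all connected spanning subgraphs of the complete graph. -/
noncomputable def mstWeight (X : Type*) [MetricSpace X] [Finite X] : ℝ :=
  sInf {w : ℝ | ∃ G : SimpleGraph X, G.Connected ∧ graphWeight G = w}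

/-- The degree of a vertex in a graph. -/
noncomputable def vdeg {X : Type*} (G : SimpleGraph X) (v : X) : ℕ :=
  {u | G.Adj v u}.ncard

/-- A metric space is `2^d`-doubling if every closed ball of radius `2r` can be covered
by at most `2^d` closed balls of radius `r` centered at points of the space. -/
def IsDoubling (X : Type*) [MetricSpace X] (d : ℕ) : Prop :=
  ∀ (x : X) (r : ℝ), 0 < r → ∃ c : Finset X, c.card ≤ 2 ^ d ∧
    Metric.closedBall x (2 * r) ⊆ ⋃ y ∈ c, Metric.closedBall y r

section Aux

variable {X : Type*} [MetricSpace X]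

noncomputable def lenSym : Sym2 X → ℝ :=
  Sym2.lift ⟨fun a b => dist a b, fun a b => dist_comm a b⟩

lemma lenSym_nonneg (e : Sym2 X) : 0 ≤ lenSym e := by
  induction e using Sym2.ind with
  | _ a b => simpa [lenSym] using dist_nonneg

lemma lenSym_mk (a b : X) : lenSym (s(a, b)) = dist a b := rfl

variable {G : SimpleGraph X}

@[simp] lemma walkWeight_nil {u : X} : walkWeight (SimpleGraph.Walk.nil : G.Walk u u) = 0 := rfl

@[simp] lemma walkWeight_cons {u v w : X} (h : G.Adj u v) (p : G.Walk v w) :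
    walkWeight (SimpleGraph.Walk.cons h p) = dist u v + walkWeight p := by
  simp [walkWeight]

lemma walkWeight_append {u v w : X} (p : G.Walk u v) (q : G.Walk v w) :
    walkWeight (p.append q) = walkWeight p + walkWeight q := by
  simp [walkWeight, SimpleGraph.Walk.darts_append]

lemma walkWeight_nonneg {u v : X} (p : G.Walk u v) : 0 ≤ walkWeight p := by
  apply List.sum_nonneg
  intro x hx
  simp only [List.mem_map] at hx
  obtain ⟨d, -, rfl⟩ := hx
  exact dist_nonneg

/-- chain distance of a list with head `x` -/
noncomputable def chainAux (x : X) : List X → ℝ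
  | [] => 0
  | y :: l => dist x y + chainAux y l

noncomputable def chainD : List X → ℝ
  | [] => 0
  | x :: l => chainAux x l

lemma chainAux_nonneg (x : X) (l : List X) : 0 ≤ chainAux x l := by
  induction l generalizing x with
  | nil => simp [chainAux]
  | cons y l ih => exact add_nonneg dist_nonneg (ih y)

lemma chainAux_triangle (a b : X) (l : List X) :
    chainAux a l ≤ dist a b + chainAux b l := by
  cases l with
  | nil => simpa [chainAux] using dist_nonneg
  | cons y l =>
    simp only [chainAux]
    have := dist_triangle a b y
    linarith

lemma chainAux_mono {l₁ l₂ : List X} (h : l₁.Sublist l₂) (a : X) :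
    chainAux a l₁ ≤ chainAux a l₂ := by
  induction h generalizing a with
  | slnil => exact le_refl _
  | @cons l₁ l₂ b h ih =>
    calc chainAux a l₁ ≤ dist a b + chainAux b l₁ := chainAux_triangle a b l₁
    _ ≤ dist a b + chainAux b l₂ := by linarith [ih b]
    _ = chainAux a (b :: l₂) := rfl
  | @cons_cons l₁ l₂ b h ih =>
    show dist a b + chainAux b l₁ ≤ dist a b + chainAux b l₂
    linarith [ih b]

lemma chainD_le_chainAux (b : X) (l : List X) : chainD l ≤ chainAux b l := by
  cases l with
  | nil => simp [chainD, chainAux]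
  | cons y l =>
    show chainAux y l ≤ dist b y + chainAux y l
    linarith [dist_nonneg (x := b) (y := y)]

lemma chainD_nonneg (l : List X) : 0 ≤ chainD l := by
  cases l with
  | nil => simp [chainD]
  | cons y l => exact chainAux_nonneg y l

lemma chainD_mono {l₁ l₂ : List X} (h : l₁.Sublist l₂) : chainD l₁ ≤ chainD l₂ := by
  induction h with
  | slnil => exact le_refl _
  | @cons l₁ l₂ b h ih => exact le_trans ih (chainD_le_chainAux b l₂)
  | @cons_cons l₁ l₂ b h ih => exact chainAux_mono h b

lemma chainD_support_le {u v : X} (w : G.Walk u v) : chainD w.support ≤ walkWeight w := by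
  induction w with
  | nil => simp [chainD, chainAux]
  | @cons a b c h p ih =>
    rw [SimpleGraph.Walk.support_cons]
    show chainAux a p.support ≤ walkWeight (SimpleGraph.Walk.cons h p)
    rw [SimpleGraph.Walk.support_eq_cons p, walkWeight_cons]
    show dist a b + chainAux b p.support.tail ≤ dist a b + walkWeight p
    have h2 : chainAux b p.support.tail = chainD p.support := by
      rw [SimpleGraph.Walk.support_eq_cons p]; rfl
    rw [h2]
    linarith [ih]

end Aux

section Tour

variable {X : Type*} [MetricSpace X] {G : SimpleGraph X}

/-- crossing lemma: a walk from inside `s` to outside `s` has an edge leaving `s`. -/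
lemma exists_crossing {a v : X} (q : G.Walk a v) (s : List X)
    (ha : a ∈ s) (hv : v ∉ s) : ∃ p z, p ∈ s ∧ z ∉ s ∧ G.Adj p z := by
  induction q with
  | nil => exact absurd ha hv
  | @cons a b c h p ih =>
    by_cases hb : b ∈ s
    · exact ih hb hv
    · exact ⟨a, b, ha, hb, h⟩

/-- detour insertion -/
lemma detour [DecidableEq X] {u p z : X} (w : G.Walk u u) (hp : p ∈ w.support) (h : G.Adj p z) :
    ∃ w' : G.Walk u u, (∀ x ∈ w.support, x ∈ w'.support) ∧ z ∈ w'.support ∧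
      walkWeight w' = walkWeight w + 2 * dist p z := by
  refine ⟨(w.takeUntil p hp).append (SimpleGraph.Walk.cons h
    (SimpleGraph.Walk.cons h.symm (w.dropUntil p hp))), ?_, ?_, ?_⟩
  · intro x hx
    rw [← SimpleGraph.Walk.take_spec w hp, SimpleGraph.Walk.mem_support_append_iff] at hx
    rw [SimpleGraph.Walk.mem_support_append_iff]
    rcases hx with hx | hx
    · exact Or.inl hx
    · exact Or.inr (by simp [SimpleGraph.Walk.support_cons, hx])
  · rw [SimpleGraph.Walk.mem_support_append_iff]
    exact Or.inr (by simp)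
  · rw [walkWeight_append, walkWeight_cons, walkWeight_cons]
    have := congrArg walkWeight (SimpleGraph.Walk.take_spec w hp)
    rw [walkWeight_append] at this
    rw [dist_comm z p]
    linarith

open Finset in
/-- main tour construction -/
lemma tour_aux [Fintype X] [DecidableEq X] (hG : G.Connected) (u : X) :
    ∀ (k : ℕ) (w : G.Walk u u) (E : Finset (Sym2 X)),
      (Finset.univ.filter (fun x => x ∉ w.support)).card ≤ k →
      (↑E ⊆ G.edgeSet) →
      (∀ e ∈ E, ∀ x ∈ e, x ∈ w.support) →
      ∃ w' : G.Walk u u, (∀ v : X, v ∈ w'.support) ∧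
        walkWeight w' ≤ walkWeight w +
          2 * ∑ e ∈ (Set.toFinite G.edgeSet).toFinset \ E, lenSym e := by
  classical
  intro k
  induction k with
  | zero =>
    intro w E hcard hE hEsupp
    refine ⟨w, ?_, ?_⟩
    · intro v
      by_contra hv
      have : v ∈ Finset.univ.filter (fun x => x ∉ w.support) := by simp [hv]
      have := Finset.card_pos.mpr ⟨v, this⟩
      omega
    · have : 0 ≤ ∑ e ∈ (Set.toFinite G.edgeSet).toFinset \ E, lenSym e :=
        Finset.sum_nonneg fun e _ => lenSym_nonneg e
      linarith
  | succ k ih =>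
    intro w E hcard hE hEsupp
    by_cases hall : ∀ v : X, v ∈ w.support
    · refine ⟨w, hall, ?_⟩
      have : 0 ≤ ∑ e ∈ (Set.toFinite G.edgeSet).toFinset \ E, lenSym e :=
        Finset.sum_nonneg fun e _ => lenSym_nonneg e
      linarith
    · push_neg at hall
      obtain ⟨v, hv⟩ := hall
      obtain ⟨q⟩ := hG.preconnected u v
      obtain ⟨p, z, hp, hz, hadj⟩ := exists_crossing q w.support w.start_mem_support hv
      obtain ⟨w₁, hsub, hzmem, hwt⟩ := detour w hp hadj
      have hnotE : s(p, z) ∉ E := by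
        intro hmem
        exact hz (hEsupp _ hmem z (by simp))
      have hcard₁ : (Finset.univ.filter (fun x => x ∉ w₁.support)).card ≤ k := by
        have hss : Finset.univ.filter (fun x => x ∉ w₁.support) ⊂
            Finset.univ.filter (fun x => x ∉ w.support) := by
          refine Finset.ssubset_iff_of_subset ?_ |>.mpr ⟨z, by simp [hz], by simp [hzmem]⟩
          intro x hx
          simp only [Finset.mem_filter, Finset.mem_univ, true_and] at hx ⊢
          exact fun hxs => hx (hsub x hxs)
        have := Finset.card_lt_card hss
        omega
      have hE₁ : ↑(insert s(p, z) E) ⊆ G.edgeSet := by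
        intro e he
        simp only [Finset.coe_insert, Set.mem_insert_iff] at he
        rcases he with rfl | he
        · exact hadj
        · exact hE he
      have hEsupp₁ : ∀ e ∈ insert s(p, z) E, ∀ x ∈ e, x ∈ w₁.support := by
        intro e he x hx
        rcases Finset.mem_insert.mp he with rfl | he
        · rcases Sym2.mem_iff.mp hx with rfl | rfl
          · exact hsub x hp
          · exact hzmem
        · exact hsub x (hEsupp e he x hx)
      obtain ⟨w', hw'cov, hw'wt⟩ := ih w₁ (insert s(p, z) E) hcard₁ hE₁ hEsupp₁
      refine ⟨w', hw'cov, ?_⟩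
      have hmemEF : s(p, z) ∈ (Set.toFinite G.edgeSet).toFinset \ E := by
        simp only [Finset.mem_sdiff, Set.Finite.mem_toFinset]
        exact ⟨hadj, hnotE⟩
      have hins : insert s(p, z) ((Set.toFinite G.edgeSet).toFinset \ insert s(p, z) E) =
          (Set.toFinite G.edgeSet).toFinset \ E := by
        ext e
        simp only [Finset.mem_insert, Finset.mem_sdiff, Set.Finite.mem_toFinset, not_or]
        by_cases h : e = s(p, z)
        · subst h; simp [hadj, hnotE]
        · simp only [h, false_or, iff_false, not_false_iff]; tauto
      have hsplit : ∑ e ∈ (Set.toFinite G.edgeSet).toFinset \ E, lenSym e =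
          lenSym s(p, z) + ∑ e ∈ (Set.toFinite G.edgeSet).toFinset \ insert s(p, z) E,
            lenSym e := by
        rw [← hins, Finset.sum_insert (by simp)]
      rw [hsplit]
      rw [hwt] at hw'wt
      have : lenSym s(p, z) = dist p z := rfl
      linarith

lemma exists_tour [Fintype X] [DecidableEq X] (hG : G.Connected) (u : X) :
    ∃ w : G.Walk u u, (∀ v : X, v ∈ w.support) ∧ walkWeight w ≤ 2 * graphWeight G := by
  classical
  obtain ⟨w, hcov, hwt⟩ := tour_aux hG u (Finset.univ.filter
    (fun x => x ∉ (SimpleGraph.Walk.nil : G.Walk u u).support)).card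
    SimpleGraph.Walk.nil ∅ le_rfl (by simp) (by simp)
  refine ⟨w, hcov, ?_⟩
  rw [walkWeight_nil, Finset.sdiff_empty] at hwt
  have : graphWeight G = ∑ e ∈ (Set.toFinite G.edgeSet).toFinset, lenSym e := rfl
  rw [this]
  linarith

end Tour

section Main

variable {X : Type*} [MetricSpace X]

lemma chain_sum (A : Finset X) (rad : X → ℝ) (B : ℝ) (hB : 0 ≤ B)
    (hr : ∀ x ∈ A, rad x ≤ B)
    (hsep : ∀ x ∈ A, ∀ y ∈ A, x ≠ y → rad x ≤ 5 * dist x y) :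
    ∀ t : List X, t.Nodup → (∀ x ∈ t, x ∈ A) → (t.map rad).sum ≤ 5 * chainD t + B := by
  intro t
  induction t with
  | nil => intro _ _; simpa [chainD] using hB
  | cons x t' ih =>
    intro hnd hmem
    cases t' with
    | nil =>
      simpa [chainD, chainAux] using hr x (hmem x (by simp))
    | cons y t'' =>
      have hxA : x ∈ A := hmem x (by simp)
      have hyA : y ∈ A := hmem y (by simp)
      have hxy : x ≠ y := by
        intro h; subst h
        exact (List.nodup_cons.mp hnd).1 (by simp)
      have h1 : rad x ≤ 5 * dist x y := hsep x hxA y hyA hxy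
      have h2 : ((y :: t'').map rad).sum ≤ 5 * chainD (y :: t'') + B :=
        ih (List.nodup_cons.mp hnd).2 (fun z hz => hmem z (List.mem_cons_of_mem _ hz))
      have h3 : chainD (x :: y :: t'') = dist x y + chainD (y :: t'') := rfl
      simp only [List.map_cons, List.sum_cons] at h2 ⊢
      rw [h3]
      linarith

lemma graphWeight_nonneg [Finite X] (G : SimpleGraph X) : 0 ≤ graphWeight G :=
  Finset.sum_nonneg fun e _ => lenSym_nonneg e

theorem separated_radii_sum_le' [Fintype X]
    (hcard : 2 ≤ Fintype.card X)
    (A : Finset X) (rad : X → ℝ)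
    (hpos : ∀ x ∈ A, 0 < rad x)
    (hle : ∀ x ∈ A, rad x ≤ mstWeight X)
    (hsep : ∀ x ∈ A, ∀ y ∈ A, x ≠ y → max (rad x) (rad y) / 5 ≤ dist x y) :
    ∑ x ∈ A, rad x ≤ 11 * mstWeight X := by
  classical
  have hXne : Nonempty X := Fintype.card_pos_iff.mp (by omega)
  set S : Set ℝ := {w : ℝ | ∃ G : SimpleGraph X, G.Connected ∧ graphWeight G = w} with hS
  have hSne : S.Nonempty := ⟨graphWeight (⊤ : SimpleGraph X), ⊤, SimpleGraph.connected_top, rfl⟩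
  have hW0 : 0 ≤ mstWeight X := by
    apply le_csInf hSne
    rintro g ⟨G, hG, rfl⟩
    exact graphWeight_nonneg G
  set W := mstWeight X with hWdef
  have key : ∀ g ∈ S, (∑ x ∈ A, rad x - W) / 10 ≤ g := by
    rintro g ⟨G, hG, rfl⟩
    obtain ⟨u⟩ := hXne
    obtain ⟨w, hcov, hwt⟩ := exists_tour hG u
    set t : List X := w.support.dedup.filter (fun x => decide (x ∈ A)) with ht
    have htnd : t.Nodup := (w.support.nodup_dedup).filter _
    have htsub : t.Sublist w.support :=
      List.filter_sublist.trans (w.support.dedup_sublist)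
    have htmem : ∀ x, x ∈ t ↔ x ∈ A := by
      intro x
      rw [ht, List.mem_filter, List.mem_dedup, decide_eq_true_iff]
      exact ⟨fun h => h.2, fun h => ⟨hcov x, h⟩⟩
    have hAt : A = t.toFinset := by
      ext x; rw [List.mem_toFinset, htmem]
    have hsum : ∑ x ∈ A, rad x = (t.map rad).sum := by
      rw [hAt, List.sum_toFinset _ htnd]
    have hchain : (t.map rad).sum ≤ 5 * chainD t + W := by
      apply chain_sum A rad W hW0 hle _ t htnd (fun x hx => (htmem x).mp hx)
      intro x hx y hy hxy
      have := hsep x hx y hy hxy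
      have hmax : rad x ≤ max (rad x) (rad y) := le_max_left _ _
      linarith
    have hD : chainD t ≤ walkWeight w :=
      le_trans (chainD_mono htsub) (chainD_support_le w)
    rw [hsum]
    linarith
  have hfin : (∑ x ∈ A, rad x - W) / 10 ≤ W := le_csInf hSne key
  linarith

end Main

/-- The charging argument following Lemma 4.2 of the paper: if the points of `A` carry
positive radii, each at most `ω(MST(X))`, and any two distinct points of `A` are at
distance at least a fifth of the larger radius, then `Σ_{x∈A} rad(x) ≤ 11·ω(MST(X))`. -/
theorem separated_radii_sum_le {X : Type*} [MetricSpace X] [Fintype X]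
    (hcard : 2 ≤ Fintype.card X)
    (A : Finset X) (rad : X → ℝ)
    (hpos : ∀ x ∈ A, 0 < rad x)
    (hle : ∀ x ∈ A, rad x ≤ mstWeight X)
    (hsep : ∀ x ∈ A, ∀ y ∈ A, x ≠ y → max (rad x) (rad y) / 5 ≤ dist x y) :
    ∑ x ∈ A, rad x ≤ 11 * mstWeight X :=
  separated_radii_sum_le' hcard A rad hpos hle hsep
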